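/- There exists an analytic set E ⊆ ℝ such that for every meager set Z ⊆ ℝ there exists x ∈ ℝ such that E \ (x + Z) is not Borel. -/

import Mathlib

open MeasureTheory Set Pointwise

noncomputable section Stmt15Aux

namespace Stmt15

instance : PolishSpace ((ℕ → ℕ) × ((ℕ → Bool) × (ℕ → ℕ))) :=
  {}

instance : PolishSpace ((ℕ → Bool) × (ℕ → ℕ)) := {}

instance : PolishSpace (ℕ → Bool) := {}


/-! Section I: a non-Borel analytic subset of `ℕ → Bool`. -/

/-- continuity into a discrete space from local constancy -/
theorem cont_of_locally_const {X Y : Type*} [TopologicalSpace X] [TopologicalSpace Y]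
    [DiscreteTopology Y] {f : X → Y}
    (h : ∀ x : X, ∃ N ∈ nhds x, ∀ y ∈ N, f y = f x) : Continuous f := by
  rw [continuous_iff_continuousAt]
  intro x
  intro s hs
  rw [Filter.mem_map]
  obtain ⟨N, hN, hconst⟩ := h x
  refine Filter.mem_of_superset hN ?_
  intro y hy
  simp only [Set.mem_preimage]
  rw [hconst y hy]
  exact mem_of_mem_nhds hs

/-- prefix of a sequence as a list -/
def pfx {α : Type*} (x : ℕ → α) (n : ℕ) : List α := List.ofFn (fun i : Fin n => x i)

theorem pfx_eq_of_agree {α : Type*} {x y : ℕ → α} {n : ℕ} (h : ∀ i < n, x i = y i) :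
    pfx x n = pfx y n := by
  unfold pfx
  congr 1
  funext i
  exact h i i.isLt

theorem pfx_length {α : Type*} (x : ℕ → α) (n : ℕ) : (pfx x n).length = n := by
  simp [pfx]

theorem pfx_get {α : Type*} (x : ℕ → α) (n i : ℕ) (h : i < n) :
    (pfx x n).get ⟨i, by simpa [pfx_length]⟩ = x i := by
  simp [pfx]

/-- the coding map -/
noncomputable def codeN (p : List Bool × List ℕ) : ℕ := Encodable.encode p

theorem codeN_inj : Function.Injective codeN := Encodable.encode_injective

/-- the closed set whose projection is our analytic non-Borel set -/
def Chat : Set ((ℕ → Bool) × (ℕ → ℕ)) :=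
  {p | ∀ n : ℕ, p.1 (codeN (pfx p.1 n, pfx p.2 n)) = true}

theorem cylinder_mem_nhds {α β : Type*} [TopologicalSpace α] [TopologicalSpace β] [DiscreteTopology α] [DiscreteTopology β] (p : (ℕ → α) × (ℕ → β)) (n : ℕ) :
    {q : (ℕ → α) × (ℕ → β) | ∀ i < n, q.1 i = p.1 i ∧ q.2 i = p.2 i} ∈ nhds p := by
  have : {q : (ℕ → α) × (ℕ → β) | ∀ i < n, q.1 i = p.1 i ∧ q.2 i = p.2 i}
      = ⋂ i ∈ Finset.range n, ({q : (ℕ → α) × (ℕ → β) | q.1 i = p.1 i} ∩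
        {q | q.2 i = p.2 i}) := by
    ext q
    constructor
    · intro hq
      refine Set.mem_iInter₂.2 fun i hi => ⟨(hq i (Finset.mem_range.1 hi)).1, (hq i (Finset.mem_range.1 hi)).2⟩
    · intro hq i hi
      exact Set.mem_iInter₂.1 hq i (Finset.mem_range.2 hi)
  rw [this]
  refine (Filter.biInter_finset_mem _).2 fun i _ => Filter.inter_mem ?_ ?_
  · have hc : Continuous fun q : (ℕ → α) × (ℕ → β) => q.1 i :=
      (continuous_apply i).comp continuous_fst
    have : IsOpen {q : (ℕ → α) × (ℕ → β) | q.1 i = p.1 i} := by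
      have := (isOpen_discrete ({p.1 i} : Set α)).preimage hc
      simpa [Set.preimage, Set.mem_singleton_iff] using this
    exact this.mem_nhds rfl
  · have hc : Continuous fun q : (ℕ → α) × (ℕ → β) => q.2 i :=
      (continuous_apply i).comp continuous_snd
    have : IsOpen {q : (ℕ → α) × (ℕ → β) | q.2 i = p.2 i} := by
      have := (isOpen_discrete ({p.2 i} : Set β)).preimage hc
      simpa [Set.preimage, Set.mem_singleton_iff] using this
    exact this.mem_nhds rfl

theorem Chat_closed : IsClosed Chat := by
  have : Chat = ⋂ n : ℕ,
      {p : (ℕ → Bool) × (ℕ → ℕ) | p.1 (codeN (pfx p.1 n, pfx p.2 n)) = true} := by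
    ext p; simp [Chat, Set.mem_iInter]
  rw [this]
  refine isClosed_iInter fun n => ?_
  have hcont : Continuous fun p : (ℕ → Bool) × (ℕ → ℕ) =>
      p.1 (codeN (pfx p.1 n, pfx p.2 n)) := by
    apply cont_of_locally_const
    intro p
    refine ⟨{q | ∀ i < max n (codeN (pfx p.1 n, pfx p.2 n) + 1),
        q.1 i = p.1 i ∧ q.2 i = p.2 i}, cylinder_mem_nhds p _, ?_⟩
    intro q hq
    have h1 : pfx q.1 n = pfx p.1 n :=
      pfx_eq_of_agree fun i hi => (hq i (lt_of_lt_of_le hi (le_max_left _ _))).1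
    have h2 : pfx q.2 n = pfx p.2 n :=
      pfx_eq_of_agree fun i hi => (hq i (lt_of_lt_of_le hi (le_max_left _ _))).2
    rw [h1, h2]
    exact (hq _ (lt_of_lt_of_le (Nat.lt_succ_self _) (le_max_right _ _))).1
  have : IsClosed ({true} : Set Bool) := isClosed_discrete _
  exact this.preimage hcont

/-- the analytic non-Borel set -/
def ASet : Set (ℕ → Bool) := Prod.fst '' Chat

theorem ASet_analytic : AnalyticSet ASet :=
  (Chat_closed.analyticSet).image_of_continuous continuous_fst

theorem mem_ASet_iff (z : ℕ → Bool) :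
    z ∈ ASet ↔ ∃ y : ℕ → ℕ, ∀ n, z (codeN (pfx z n, pfx y n)) = true := by
  constructor
  · rintro ⟨⟨z', y⟩, hzy, rfl⟩
    exact ⟨y, hzy⟩
  · rintro ⟨y, hy⟩
    exact ⟨(z, y), hy, rfl⟩


theorem agree_of_pfx_eq {α : Type*} {x y : ℕ → α} {n : ℕ} (h : pfx x n = pfx y n) :
    ∀ i < n, x i = y i := by
  intro i hi
  have := List.ofFn_injective h
  exact congrFun this ⟨i, hi⟩
/-- continuity modulus for maps between sequence spaces -/
theorem modulus {g : (ℕ → ℕ) → (ℕ → Bool)} (hg : Continuous g) (y : ℕ → ℕ) (j : ℕ) :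
    ∃ N : ℕ, ∀ w : ℕ → ℕ, (∀ i < N, w i = y i) → g w j = g y j := by
  have hV : IsOpen ((fun w => g w j) ⁻¹' {g y j}) :=
    (isOpen_discrete _).preimage ((continuous_apply j).comp hg)
  have hy : y ∈ (fun w => g w j) ⁻¹' {g y j} := rfl
  obtain ⟨I, u, hu, hsub⟩ := isOpen_pi_iff.1 hV y hy
  refine ⟨I.sup id + 1, fun w hw => ?_⟩
  have : w ∈ (I : Set ℕ).pi u := by
    intro a ha
    have : w a = y a := hw a (Nat.lt_succ_of_le (Finset.le_sup (f := id) ha))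
    rw [this]
    exact (hu a ha).2
  exact hsub this

theorem ASet_not_measurable : ¬ MeasurableSet ASet := by
  intro hA
  have hco : AnalyticSet ASetᶜ := hA.compl.analyticSet
  rw [AnalyticSet] at hco
  rcases hco with hco | ⟨g, hgc, hgr⟩
  · -- ASetᶜ = ∅ : but const false ∉ ASet
    have : (fun _ => false) ∈ ASet := by
      have : (fun _ => false) ∉ (∅ : Set (ℕ → Bool)) := notMem_empty _
      rw [← hco] at this
      simpa using this
    obtain ⟨y, hy⟩ := (mem_ASet_iff _).1 this
    simpa using hy 0
  · -- the universal-set diagonalization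
    classical
    set x₀ : ℕ → Bool := fun m =>
      if ∃ (y : ℕ → ℕ) (n : ℕ), m = codeN (pfx (g y) n, pfx y n) then true else false with hx₀
    have key : ∀ z : ℕ → Bool,
        (∃ y : ℕ → ℕ, ∀ n, x₀ (codeN (pfx z n, pfx y n)) = true) ↔ z ∈ range g := by
      intro z
      constructor
      · rintro ⟨y, hy⟩
        -- from each n, extract a witness
        have hw : ∀ n : ℕ, ∃ yn : ℕ → ℕ,
            pfx (g yn) n = pfx z n ∧ pfx yn n = pfx y n := by
          intro n
          have := hy n
          rw [hx₀] at this
          simp only at this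
          by_cases h : ∃ (y' : ℕ → ℕ) (n' : ℕ),
              codeN (pfx z n, pfx y n) = codeN (pfx (g y') n', pfx y' n')
          · obtain ⟨y', n', hcode⟩ := h
            have heq := codeN_inj hcode
            have h1 : pfx z n = pfx (g y') n' := congrArg Prod.fst heq
            have h2 : pfx y n = pfx y' n' := congrArg Prod.snd heq
            have hn : n' = n := by
              have := congrArg List.length h1
              simpa [pfx_length] using this.symm
            subst hn
            exact ⟨y', h1.symm, h2.symm⟩
          · exfalso
            rw [if_neg h] at this
            exact Bool.false_ne_true this
        -- show z = g y
        refine ⟨y, ?_⟩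
        funext j
        obtain ⟨N, hN⟩ := modulus hgc y j
        set n := max N (j + 1) with hn
        obtain ⟨yn, h1, h2⟩ := hw n
        have hyn : ∀ i < n, yn i = y i := agree_of_pfx_eq h2
        have hgj : g yn j = g y j := hN yn fun i hi => hyn i (lt_of_lt_of_le hi (le_max_left _ _))
        have hzj : g yn j = z j :=
          agree_of_pfx_eq h1 j (lt_of_lt_of_le (Nat.lt_succ_self j) (le_max_right _ _))
        rw [← hzj, hgj]
      · rintro ⟨y, rfl⟩
        refine ⟨y, fun n => ?_⟩
        rw [hx₀]
        simp only
        rw [if_pos ⟨y, n, rfl⟩]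
    have hdiag := key x₀
    have hmem : x₀ ∈ ASet ↔ x₀ ∈ range g := (mem_ASet_iff x₀).trans (key x₀)
    rw [hgr] at hmem
    simp only [Set.mem_compl_iff] at hmem
    tauto


/-! Section II: the embedding `H`. -/

noncomputable def w3 (k : ℕ) : ℝ := (3 : ℝ)⁻¹ ^ k

theorem w3_pos (k : ℕ) : 0 < w3 k := pow_pos (by norm_num) k
theorem w3_nonneg (k : ℕ) : 0 ≤ w3 k := (w3_pos k).le
theorem w3_anti {a b : ℕ} (h : a ≤ b) : w3 b ≤ w3 a :=
  pow_le_pow_of_le_one (by norm_num) (by norm_num) h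
theorem w3_add (a b : ℕ) : w3 (a + b) = w3 a * w3 b := pow_add _ a b
theorem w3_succ (a : ℕ) : w3 (a + 1) = w3 a * 3⁻¹ := pow_succ _ _

/-- the positions sequence built from gaps -/
def sOf (u : ℕ → ℕ) : ℕ → ℕ
  | 0 => u 0
  | (i + 1) => sOf u i + 3 + u (i + 1)

theorem sOf_succ_ge (u : ℕ → ℕ) (i : ℕ) : sOf u i + 3 ≤ sOf u (i + 1) := by
  simp only [sOf]
  omega

theorem w3_mul3 (i : ℕ) : w3 (3 * i) = (27⁻¹ : ℝ) ^ i := by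
  unfold w3
  rw [pow_mul]
  norm_num

theorem sOf_ge (u : ℕ → ℕ) (i : ℕ) : 3 * i ≤ sOf u i := by
  induction i with
  | zero => exact Nat.zero_le _
  | succ i ih => have := sOf_succ_ge u i; omega

theorem sOf_add_ge (u : ℕ → ℕ) (n i : ℕ) : sOf u n + 3 * i ≤ sOf u (i + n) := by
  induction i with
  | zero => simp
  | succ i ih =>
    have h1 := sOf_succ_ge u (i + n)
    have h2 : i + 1 + n = (i + n) + 1 := by omega
    rw [h2]
    omega

theorem sOf_inj : Function.Injective sOf := by
  intro u v h
  funext i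
  induction i with
  | zero => have := congrFun h 0; simpa [sOf] using this
  | succ i ih =>
    have h1 := congrFun h (i + 1)
    have h2 := congrFun h i
    simp only [sOf] at h1
    omega

/-- reconstruct gaps from positions -/
def uOf (s : ℕ → ℕ) : ℕ → ℕ
  | 0 => s 0
  | (i + 1) => s (i + 1) - s i - 3

theorem sOf_uOf {s : ℕ → ℕ} (h : ∀ i, s i + 3 ≤ s (i + 1)) : sOf (uOf s) = s := by
  funext i
  induction i with
  | zero => simp [sOf, uOf]
  | succ i ih => simp only [sOf, uOf, ih]; have := h i; omega

/-- a single term of the series -/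
noncomputable def trm (i : ℕ) (p : (ℕ → ℕ) × (ℕ → Bool)) : ℝ :=
  2 * w3 (sOf p.1 i) + (if p.2 i then w3 (sOf p.1 i + 1) else 0)

theorem trm_nonneg (i : ℕ) (p : (ℕ → ℕ) × (ℕ → Bool)) : 0 ≤ trm i p := by
  unfold trm
  have := w3_nonneg (sOf p.1 i); have := w3_nonneg (sOf p.1 i + 1)
  split <;> nlinarith

theorem trm_le (i : ℕ) (p : (ℕ → ℕ) × (ℕ → Bool)) :
    trm i p ≤ (7 / 3) * w3 (sOf p.1 i) := by
  unfold trm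
  rw [w3_succ]
  have := w3_nonneg (sOf p.1 i)
  split <;> nlinarith

theorem trm_lb (i : ℕ) (p : (ℕ → ℕ) × (ℕ → Bool)) : 2 * w3 (sOf p.1 i) ≤ trm i p := by
  unfold trm
  have := w3_nonneg (sOf p.1 i + 1)
  split <;> nlinarith

theorem trm_bound (i : ℕ) (p : (ℕ → ℕ) × (ℕ → Bool)) :
    ‖trm i p‖ ≤ 3 * ((27 : ℝ)⁻¹) ^ i := by
  rw [Real.norm_eq_abs, abs_of_nonneg (trm_nonneg i p)]
  have h1 : trm i p ≤ (7/3) * w3 (sOf p.1 i) := trm_le i p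
  have h2 : w3 (sOf p.1 i) ≤ w3 (3 * i) := w3_anti (sOf_ge p.1 i)
  have h3 : w3 (3 * i) = ((27 : ℝ)⁻¹) ^ i := w3_mul3 i
  have h4 : (0:ℝ) < (27⁻¹ : ℝ) ^ i := pow_pos (by norm_num) i
  nlinarith [w3_nonneg (sOf p.1 i)]

theorem summable_trm (p : (ℕ → ℕ) × (ℕ → Bool)) : Summable fun i => trm i p := by
  apply Summable.of_nonneg_of_le (fun i => trm_nonneg i p)
    (fun i => (le_abs_self _).trans (trm_bound i p))
  exact (summable_geometric_of_lt_one (by norm_num) (by norm_num)).mul_left 3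

/-- the embedding -/
noncomputable def Hmap (p : (ℕ → ℕ) × (ℕ → Bool)) : ℝ := ∑' i, trm i p

theorem sOf_continuous (i : ℕ) : Continuous fun u : ℕ → ℕ => sOf u i := by
  induction i with
  | zero => exact continuous_apply 0
  | succ i ih =>
    have h : Continuous fun u : ℕ → ℕ => (sOf u i, u (i + 1)) :=
      ih.prodMk (continuous_apply (i + 1))
    exact (continuous_of_discreteTopology
      (f := fun q : ℕ × ℕ => q.1 + 3 + q.2)).comp h

theorem trm_continuous (i : ℕ) : Continuous (trm i) := by
  have h : Continuous fun p : (ℕ → ℕ) × (ℕ → Bool) => (sOf p.1 i, p.2 i) :=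
    ((sOf_continuous i).comp continuous_fst).prodMk ((continuous_apply i).comp continuous_snd)
  have : trm i = (fun q : ℕ × Bool => 2 * w3 q.1 + (if q.2 then w3 (q.1 + 1) else 0)) ∘
      (fun p : (ℕ → ℕ) × (ℕ → Bool) => (sOf p.1 i, p.2 i)) := rfl
  rw [this]
  exact (continuous_of_discreteTopology).comp h

theorem Hmap_continuous : Continuous Hmap := by
  have hs : Summable (fun i : ℕ => 3 * (27⁻¹ : ℝ) ^ i) :=
    (summable_geometric_of_lt_one (by norm_num) (by norm_num)).mul_left 3
  exact continuous_tsum trm_continuous hs trm_bound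

/-- tail of the series -/
noncomputable def tl (n : ℕ) (p : (ℕ → ℕ) × (ℕ → Bool)) : ℝ := ∑' i, trm (i + n) p

theorem summable_tl (n : ℕ) (p : (ℕ → ℕ) × (ℕ → Bool)) : Summable fun i => trm (i + n) p :=
  (summable_trm p).comp_injective (add_left_injective n)

theorem Hmap_eq_head_add_tl (n : ℕ) (p : (ℕ → ℕ) × (ℕ → Bool)) :
    Hmap p = (∑ i ∈ Finset.range n, trm i p) + tl n p :=
  (Summable.sum_add_tsum_nat_add n (summable_trm p)).symm

theorem tl_lb (n : ℕ) (p : (ℕ → ℕ) × (ℕ → Bool)) : 2 * w3 (sOf p.1 n) ≤ tl n p := by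
  have h0 : trm (0 + n) p ≤ tl n p :=
    Summable.le_tsum (summable_tl n p) 0 fun i _ => trm_nonneg _ _
  have := trm_lb n p
  simpa using le_trans this (by simpa using h0)

theorem tl_ub (n : ℕ) (p : (ℕ → ℕ) × (ℕ → Bool)) : tl n p ≤ (5 / 2) * w3 (sOf p.1 n) := by
  have hle : ∀ i, trm (i + n) p ≤ (7/3) * w3 (sOf p.1 n) * (27⁻¹ : ℝ) ^ i := by
    intro i
    have h1 := trm_le (i + n) p
    have h2 : w3 (sOf p.1 (i + n)) ≤ w3 (sOf p.1 n + 3 * i) := w3_anti (sOf_add_ge p.1 n i)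
    have h3 : w3 (sOf p.1 n + 3 * i) = w3 (sOf p.1 n) * (27⁻¹ : ℝ) ^ i := by
      rw [w3_add, w3_mul3]
    calc trm (i + n) p ≤ (7/3) * w3 (sOf p.1 (i + n)) := h1
      _ ≤ (7/3) * (w3 (sOf p.1 n) * (27⁻¹:ℝ)^i) := by nlinarith [pow_pos (by norm_num : (0:ℝ) < 27⁻¹) i]
      _ = (7/3) * w3 (sOf p.1 n) * (27⁻¹:ℝ)^i := by ring
  have hsum : Summable fun i => (7/3) * w3 (sOf p.1 n) * (27⁻¹ : ℝ) ^ i :=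
    (summable_geometric_of_lt_one (by norm_num) (by norm_num)).mul_left _
  have := Summable.tsum_le_tsum hle (summable_tl n p) hsum
  have hgeo : ∑' i : ℕ, (7/3) * w3 (sOf p.1 n) * (27⁻¹ : ℝ) ^ i
      = (7/3) * w3 (sOf p.1 n) * (27/26 : ℝ) := by
    rw [tsum_mul_left, tsum_geometric_of_lt_one (by norm_num) (by norm_num)]
    norm_num
  rw [hgeo] at this
  unfold tl
  nlinarith [w3_nonneg (sOf p.1 n), this]

theorem tl_succ (n : ℕ) (p : (ℕ → ℕ) × (ℕ → Bool)) : tl n p = trm n p + tl (n + 1) p := by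
  unfold tl
  rw [Summable.tsum_eq_zero_add (summable_tl n p)]
  simp only [zero_add]
  congr 1
  apply tsum_congr
  intro i
  congr 1
  omega

theorem head_congr {n : ℕ} {p q : (ℕ → ℕ) × (ℕ → Bool)}
    (h : ∀ i < n, sOf p.1 i = sOf q.1 i ∧ p.2 i = q.2 i) :
    ∑ i ∈ Finset.range n, trm i p = ∑ i ∈ Finset.range n, trm i q := by
  refine Finset.sum_congr rfl fun i hi => ?_
  obtain ⟨h1, h2⟩ := h i (Finset.mem_range.1 hi)
  unfold trm
  rw [h1, h2]

/-- tails differ if s-values differ -/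
theorem tl_lt_of_s_lt {n : ℕ} {p q : (ℕ → ℕ) × (ℕ → Bool)}
    (h : sOf p.1 n < sOf q.1 n) : tl n q < tl n p := by
  have h1 : 2 * w3 (sOf p.1 n) ≤ tl n p := tl_lb n p
  have h2 : tl n q ≤ (5 / 2) * w3 (sOf q.1 n) := tl_ub n q
  have h3 : w3 (sOf q.1 n) ≤ w3 (sOf p.1 n + 1) := w3_anti h
  have h4 : w3 (sOf p.1 n + 1) = w3 (sOf p.1 n) * 3⁻¹ := w3_succ _
  nlinarith [w3_pos (sOf p.1 n), w3_pos (sOf q.1 n)]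

/-- tails differ if the bools differ (equal s) -/
theorem tl_lt_of_bool {n : ℕ} {p q : (ℕ → ℕ) × (ℕ → Bool)}
    (hs : sOf p.1 n = sOf q.1 n) (hp : p.2 n = false) (hq : q.2 n = true) :
    tl n p < tl n q := by
  set m := sOf p.1 n with hm
  have h1 : tl n p = trm n p + tl (n + 1) p := tl_succ n p
  have h2 : trm n p = 2 * w3 m := by unfold trm; rw [hp]; simp [hm]
  have h3 : tl (n + 1) p ≤ (5 / 2) * w3 (sOf p.1 (n + 1)) := tl_ub (n + 1) p
  have h4 : w3 (sOf p.1 (n + 1)) ≤ w3 (m + 3) := w3_anti (sOf_succ_ge p.1 n)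
  have h5 : trm n q ≤ tl n q := by
    have := tl_succ n q
    have h6 : 0 ≤ tl (n + 1) q := by
      have h7 : 2 * w3 (sOf q.1 (n + 1)) ≤ tl (n + 1) q := tl_lb (n + 1) q
      nlinarith [w3_pos (sOf q.1 (n + 1))]
    linarith
  have h8 : trm n q = 2 * w3 m + w3 (m + 1) := by
    unfold trm; rw [hq, ← hs]; simp
  have h9 : w3 (m + 3) = w3 m * 3⁻¹ * 3⁻¹ * 3⁻¹ := by
    rw [show m + 3 = ((m + 1) + 1) + 1 by omega, w3_succ, w3_succ, w3_succ]
  have h10 : w3 (m + 1) = w3 m * 3⁻¹ := w3_succ _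
  nlinarith [w3_pos m]

theorem Hmap_inj : Function.Injective Hmap := by
  intro p q hpq
  by_contra hne
  have hex : ∃ i, ¬(sOf p.1 i = sOf q.1 i ∧ p.2 i = q.2 i) := by
    by_contra hall
    push_neg at hall
    apply hne
    have h1 : sOf p.1 = sOf q.1 := funext fun i => ((hall i).1 : _)
    have h2 : p.2 = q.2 := funext fun i => (hall i).2
    exact Prod.ext (sOf_inj h1) h2
  classical
  set n := Nat.find hex with hnn
  have hn : ¬(sOf p.1 n = sOf q.1 n ∧ p.2 n = q.2 n) := Nat.find_spec hex
  have hmin : ∀ i < n, sOf p.1 i = sOf q.1 i ∧ p.2 i = q.2 i := by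
    intro i hi
    by_contra hcon
    exact Nat.find_min hex hi hcon
  have hhead : ∑ i ∈ Finset.range n, trm i p = ∑ i ∈ Finset.range n, trm i q :=
    head_congr hmin
  have htl : tl n p = tl n q := by
    have e1 := Hmap_eq_head_add_tl n p
    have e2 := Hmap_eq_head_add_tl n q
    rw [hpq] at e1
    rw [e2, hhead] at e1
    linarith
  by_cases hs : sOf p.1 n = sOf q.1 n
  · have hb : p.2 n ≠ q.2 n := fun hb => hn ⟨hs, hb⟩
    rcases Bool.eq_false_or_eq_true (p.2 n) with hp | hp <;>
      rcases Bool.eq_false_or_eq_true (q.2 n) with hq | hq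
    · exact hb (hp.trans hq.symm)
    · have := tl_lt_of_bool hs.symm hq hp
      linarith
    · have := tl_lt_of_bool hs hp hq
      linarith
    · exact hb (hp.trans hq.symm)
  · rcases lt_or_gt_of_ne hs with hlt | hgt
    · have := tl_lt_of_s_lt hlt
      linarith
    · have := tl_lt_of_s_lt hgt
      linarith
/-- finite head sum from explicit positions -/
noncomputable def headF (σ : ℕ → ℕ) (n : ℕ) (c : Fin n → Bool) : ℝ :=
  ∑ i : Fin n, (2 * w3 (σ i) + if c i then w3 (σ i + 1) else 0)

/-- the property ensured by one step of the construction;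
`q = (x', ρ, N)` : new center, new scale, new position. -/
def StepPred (σ : ℕ → ℕ) (n : ℕ) (x r : ℝ) (V : Set ℝ) (m₀ : ℕ) (q : ℝ × ℝ × ℕ) : Prop :=
  0 < q.2.1 ∧ |q.1 - x| < r ∧ q.2.1 ≤ r ∧ m₀ ≤ q.2.2 ∧
  ∀ (c : Fin n → Bool) (t y : ℝ), 0 ≤ t → t ≤ 3 * w3 q.2.2 → |y - q.1| ≤ q.2.1 / 4 →
    headF σ n c + t - y ∈ V

theorem dense_sub_preimage (a : ℝ) {V : Set ℝ} (hVd : Dense V) :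
    Dense ((fun v : ℝ => a - v) ⁻¹' V) := by
  intro z
  rw [Metric.mem_closure_iff]
  intro ε hε
  have := Metric.mem_closure_iff.1 (hVd (a - z)) ε hε
  obtain ⟨v, hv, hd⟩ := this
  refine ⟨a - v, by simpa using hv, ?_⟩
  rw [Real.dist_eq] at hd ⊢
  rw [abs_sub_comm] at hd
  have : z - (a - v) = v - (a - z) := by ring
  rw [this]
  exact hd

theorem step_ex (σ : ℕ → ℕ) (n : ℕ) (x r : ℝ) (hr : 0 < r) (V : Set ℝ)
    (hVo : IsOpen V) (hVd : Dense V) (m₀ : ℕ) :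
    ∃ q : ℝ × ℝ × ℕ, StepPred σ n x r V m₀ q := by
  classical
  set G : Set ℝ := Metric.ball x r ∩ ⋂ c : Fin n → Bool,
    ((fun v : ℝ => headF σ n c - v) ⁻¹' V) with hG
  have hGo : IsOpen G := Metric.isOpen_ball.inter (isOpen_iInter_of_finite fun c =>
    hVo.preimage (continuous_const.sub continuous_id))
  have hdense : Dense (⋂ c : Fin n → Bool, ((fun v : ℝ => headF σ n c - v) ⁻¹' V)) :=
    dense_iInter_of_isOpen (fun c => hVo.preimage (continuous_const.sub continuous_id))
      (fun c => dense_sub_preimage _ hVd)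
  have hne : G.Nonempty := by
    have := hdense.inter_open_nonempty (Metric.ball x r) Metric.isOpen_ball
      (Metric.nonempty_ball.2 hr)
    exact this
  obtain ⟨x', hx'⟩ := hne
  obtain ⟨ε, hε, hball⟩ := Metric.isOpen_iff.1 hGo x' hx'
  set ρ := min ε r with hρ
  have hρpos : 0 < ρ := lt_min hε hr
  -- choose N
  obtain ⟨N₀, hN₀⟩ := exists_pow_lt_of_lt_one (show (0:ℝ) < ρ/6 by linarith)
    (show (3:ℝ)⁻¹ < 1 by norm_num)
  set N := max N₀ m₀ with hN
  have hwN : 3 * w3 N ≤ ρ / 2 := by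
    have h1 : w3 N ≤ w3 N₀ := w3_anti (le_max_left _ _)
    have h2 : w3 N₀ < ρ / 6 := hN₀
    unfold w3 at *
    linarith
  refine ⟨(x', ρ, N), hρpos, ?_, min_le_right _ _, le_max_right _ _, ?_⟩
  · have := hx'.1
    rwa [Metric.mem_ball, Real.dist_eq] at this
  · intro c t y ht0 htle hy
    have hmem : y - t ∈ Metric.ball x' ε := by
      rw [Metric.mem_ball, Real.dist_eq]
      have : |y - t - x'| ≤ |y - x'| + t := by
        have := abs_sub_abs_le_abs_sub (y - t) x'
        have h3 := abs_sub (y - x') t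
        calc |y - t - x'| = |(y - x') + (-t)| := by ring_nf
          _ ≤ |y - x'| + |(-t)| := abs_add_le _ _
          _ = |y - x'| + t := by rw [abs_neg, abs_of_nonneg ht0]
      have hρε : ρ ≤ ε := min_le_left _ _
      calc |y - t - x'| ≤ |y - x'| + t := this
        _ ≤ ρ/4 + ρ/2 := by linarith
        _ < ε := by linarith
    have := hball hmem
    have hmemV : y - t ∈ (fun v : ℝ => headF σ n c - v) ⁻¹' V := by
      have h2 := this.2
      exact Set.mem_iInter.1 h2 c
    have : headF σ n c - (y - t) ∈ V := hmemV
    have heq : headF σ n c - (y - t) = headF σ n c + t - y := by ring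
    rwa [heq] at this

/-! The recursive construction. -/

section Construction

variable (V : ℕ → Set ℝ) (hVo : ∀ n, IsOpen (V n)) (hVd : ∀ n, Dense (V n))

/-- state: (positions so far, center, radius) -/
noncomputable def stepF (n : ℕ) (st : (ℕ → ℕ) × ℝ × {r : ℝ // 0 < r}) :
    (ℕ → ℕ) × ℝ × {r : ℝ // 0 < r} :=
  let ex := step_ex st.1 n st.2.1 st.2.2.1 st.2.2.2 (V n) (hVo n) (hVd n)
    (if n = 0 then 0 else st.1 (n - 1) + 3)
  (Function.update st.1 n (Classical.choose ex).2.2, (Classical.choose ex).1,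
    ⟨(Classical.choose ex).2.1 / 8, by
      have h := Classical.choose_spec ex
      have := h.1
      linarith⟩)

noncomputable def seqSt : ℕ → (ℕ → ℕ) × ℝ × {r : ℝ // 0 < r}
  | 0 => (fun _ => 0, 0, ⟨1, one_pos⟩)
  | (n + 1) => stepF V hVo hVd n (seqSt n)

noncomputable def σn (n : ℕ) : ℕ → ℕ := (seqSt V hVo hVd n).1
noncomputable def xs (n : ℕ) : ℝ := (seqSt V hVo hVd n).2.1
noncomputable def rs (n : ℕ) : ℝ := ((seqSt V hVo hVd n).2.2 : ℝ)

theorem rs_pos (n : ℕ) : 0 < rs V hVo hVd n := (seqSt V hVo hVd n).2.2.2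

theorem seq_spec (n : ℕ) :
    ∃ q : ℝ × ℝ × ℕ,
      StepPred (σn V hVo hVd n) n (xs V hVo hVd n) (rs V hVo hVd n) (V n)
        (if n = 0 then 0 else (σn V hVo hVd n) (n - 1) + 3) q ∧
      σn V hVo hVd (n + 1) = Function.update (σn V hVo hVd n) n q.2.2 ∧
      xs V hVo hVd (n + 1) = q.1 ∧
      rs V hVo hVd (n + 1) = q.2.1 / 8 := by
  refine ⟨Classical.choose (step_ex (σn V hVo hVd n) n (xs V hVo hVd n) (rs V hVo hVd n)
    (rs_pos V hVo hVd n) (V n) (hVo n) (hVd n)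
    (if n = 0 then 0 else (σn V hVo hVd n) (n - 1) + 3)),
    Classical.choose_spec _, rfl, rfl, rfl⟩

end Construction

section Construction2

variable (V : ℕ → Set ℝ) (hVo : ∀ n, IsOpen (V n)) (hVd : ∀ n, Dense (V n))

/-- the final positions -/
noncomputable def sfin (n : ℕ) : ℕ := σn V hVo hVd (n + 1) n

theorem σn_stable : ∀ m n : ℕ, n < m → σn V hVo hVd m n = sfin V hVo hVd n := by
  intro m
  induction m with
  | zero => intro n hn; omega
  | succ m ih =>
    intro n hn
    rcases Nat.lt_succ_iff_lt_or_eq.1 hn with h | h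
    · obtain ⟨q, _, hσ, _, _⟩ := seq_spec V hVo hVd m
      rw [hσ, Function.update_of_ne (by omega)]
      exact ih n h
    · subst h; rfl

theorem sfin_gap (n : ℕ) : sfin V hVo hVd n + 3 ≤ sfin V hVo hVd (n + 1) := by
  obtain ⟨q, hpred, hσ, _, _⟩ := seq_spec V hVo hVd (n + 1)
  have h1 : sfin V hVo hVd (n + 1) = q.2.2 := by
    show σn V hVo hVd (n + 2) (n + 1) = _
    rw [hσ, Function.update_self]
  have h2 := hpred.2.2.2.1
  rw [if_neg (Nat.succ_ne_zero n)] at h2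
  have h3 : σn V hVo hVd (n + 1) n = sfin V hVo hVd n := σn_stable V hVo hVd (n+1) n (by omega)
  simp only [Nat.add_sub_cancel] at h2
  omega

theorem rs_decay (n : ℕ) : rs V hVo hVd (n + 1) ≤ rs V hVo hVd n / 8 := by
  obtain ⟨q, hpred, _, _, hr⟩ := seq_spec V hVo hVd n
  rw [hr]
  have := hpred.2.2.1
  linarith

theorem xs_close (n : ℕ) : |xs V hVo hVd (n + 1) - xs V hVo hVd n| < rs V hVo hVd n := by
  obtain ⟨q, hpred, _, hx, _⟩ := seq_spec V hVo hVd n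
  rw [hx]
  exact hpred.2.1

theorem xs_dist : ∀ m k : ℕ, k ≤ m →
    |xs V hVo hVd m - xs V hVo hVd k| ≤ (8/7) * (rs V hVo hVd k - rs V hVo hVd m) := by
  intro m
  induction m with
  | zero =>
    intro k hk
    have : k = 0 := by omega
    subst this
    simp
  | succ m ih =>
    intro k hk
    rcases Nat.lt_succ_iff_lt_or_eq.1 (Nat.lt_succ_of_le hk) with h | h
    · have hkm : k ≤ m := by omega
      have h1 := ih k hkm
      have h2 := xs_close V hVo hVd m
      have h3 := rs_decay V hVo hVd m
      have : |xs V hVo hVd (m+1) - xs V hVo hVd k| ≤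
          |xs V hVo hVd (m+1) - xs V hVo hVd m| + |xs V hVo hVd m - xs V hVo hVd k| := by
        have := abs_add_le (xs V hVo hVd (m+1) - xs V hVo hVd m) (xs V hVo hVd m - xs V hVo hVd k)
        simpa using this
      have h5 := rs_pos V hVo hVd m
      have h6 := rs_pos V hVo hVd (m+1)
      linarith
    · subst h
      simp
end Construction2

section Construction3

variable (V : ℕ → Set ℝ) (hVo : ∀ n, IsOpen (V n)) (hVd : ∀ n, Dense (V n))

theorem rs_le_geom (n : ℕ) : rs V hVo hVd n ≤ (1/8 : ℝ) ^ n := by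
  induction n with
  | zero =>
    show ((seqSt V hVo hVd 0).2.2 : ℝ) ≤ 1
    norm_num [seqSt]
  | succ n ih =>
    have h1 := rs_decay V hVo hVd n
    have : ((1:ℝ)/8) ^ (n+1) = (1/8)^n / 8 := by ring
    rw [this]
    linarith

theorem xs_cauchy : CauchySeq (xs V hVo hVd) := by
  apply cauchySeq_of_le_geometric (1/8 : ℝ) 1 (by norm_num)
  intro n
  rw [Real.dist_eq, abs_sub_comm]
  have h1 := xs_close V hVo hVd n
  have h2 := rs_le_geom V hVo hVd n
  have : (1:ℝ) * (1/8)^n = (1/8)^n := by ring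
  rw [this]
  linarith

/-- the limit point -/
noncomputable def xlim : ℝ :=
  Classical.choose (cauchySeq_tendsto_of_complete (xs_cauchy V hVo hVd))

theorem xlim_spec : Filter.Tendsto (xs V hVo hVd) Filter.atTop (nhds (xlim V hVo hVd)) :=
  Classical.choose_spec (cauchySeq_tendsto_of_complete (xs_cauchy V hVo hVd))

theorem xlim_close (k : ℕ) : |xlim V hVo hVd - xs V hVo hVd k| ≤ 2 * rs V hVo hVd k := by
  have htend : Filter.Tendsto (fun m => |xs V hVo hVd m - xs V hVo hVd k|)
      Filter.atTop (nhds (|xlim V hVo hVd - xs V hVo hVd k|)) := by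
    have h1 : Filter.Tendsto (fun m => xs V hVo hVd m - xs V hVo hVd k)
        Filter.atTop (nhds (xlim V hVo hVd - xs V hVo hVd k)) :=
      (xlim_spec V hVo hVd).sub tendsto_const_nhds
    exact h1.abs
  apply le_of_tendsto htend
  filter_upwards [Filter.eventually_ge_atTop k] with m hm
  have h1 := xs_dist V hVo hVd m k hm
  have h2 := rs_pos V hVo hVd m
  have h3 := rs_pos V hVo hVd k
  linarith

end Construction3


/-! Final assembly. -/

theorem construction_main (V : ℕ → Set ℝ) (hVo : ∀ n, IsOpen (V n)) (hVd : ∀ n, Dense (V n)) :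
    ∃ (u : ℕ → ℕ) (x : ℝ), ∀ (a : ℕ → Bool) (n : ℕ), Hmap (u, a) - x ∈ V n := by
  have hgap : ∀ i, sfin V hVo hVd i + 3 ≤ sfin V hVo hVd (i + 1) := sfin_gap V hVo hVd
  set u := uOf (sfin V hVo hVd) with hu
  have hsu : sOf u = sfin V hVo hVd := sOf_uOf hgap
  refine ⟨u, xlim V hVo hVd, ?_⟩
  intro a n
  obtain ⟨q, hpred, hσ, hx, hr⟩ := seq_spec V hVo hVd n
  have hq2 : q.2.2 = sfin V hVo hVd n := by
    have h1 : sfin V hVo hVd n = σn V hVo hVd (n + 1) n := rfl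
    rw [h1, hσ, Function.update_self]
  -- head equality
  have hhead : ∑ i ∈ Finset.range n, trm i (u, a)
      = headF (σn V hVo hVd n) n (fun i : Fin n => a i) := by
    have hFin : headF (σn V hVo hVd n) n (fun i : Fin n => a i)
        = ∑ i ∈ Finset.range n,
            (2 * w3 (σn V hVo hVd n i) + if a i then w3 (σn V hVo hVd n i + 1) else 0) :=
      Fin.sum_univ_eq_sum_range
        (fun i => (2 * w3 (σn V hVo hVd n i) + if a i then w3 (σn V hVo hVd n i + 1) else 0)) n
    rw [hFin]
    apply Finset.sum_congr rfl
    intro i hi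
    have hσi : sOf u i = σn V hVo hVd n i := by
      rw [hsu]
      exact (σn_stable V hVo hVd n i (Finset.mem_range.1 hi)).symm
    unfold trm
    simp only
    rw [hσi]
  -- bounds on the tail
  have ht0 : 0 ≤ tl n (u, a) := by
    have h1 := tl_lb n (u, a)
    have h2 := w3_pos (sOf u n)
    nlinarith
  have htle : tl n (u, a) ≤ 3 * w3 q.2.2 := by
    have h1 := tl_ub n (u, a)
    have h2 : sOf u n = q.2.2 := by rw [hsu, hq2]
    rw [h2] at h1
    have := w3_pos q.2.2
    nlinarith
  have hyclose : |xlim V hVo hVd - q.1| ≤ q.2.1 / 4 := by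
    have h1 := xlim_close V hVo hVd (n + 1)
    rw [hx] at h1
    rw [hr] at h1
    linarith
  have happ := hpred.2.2.2.2 (fun i : Fin n => a i) (tl n (u, a)) (xlim V hVo hVd)
    ht0 htle hyclose
  have heq : Hmap (u, a) - xlim V hVo hVd
      = headF (σn V hVo hVd n) n (fun i : Fin n => a i) + tl n (u, a) - xlim V hVo hVd := by
    rw [Hmap_eq_head_add_tl n (u, a), hhead]
  rwa [heq]

/-- the analytic set -/
def Ebig : Set ℝ :=
  (fun p : (ℕ → ℕ) × ((ℕ → Bool) × (ℕ → ℕ)) => Hmap (p.1, p.2.1)) ''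
    {p : (ℕ → ℕ) × ((ℕ → Bool) × (ℕ → ℕ)) | p.2 ∈ Chat}

theorem Ebig_analytic : AnalyticSet Ebig := by
  have hclosed : IsClosed {p : (ℕ → ℕ) × ((ℕ → Bool) × (ℕ → ℕ)) | p.2 ∈ Chat} :=
    Chat_closed.preimage continuous_snd
  have hco : Continuous fun p : (ℕ → ℕ) × ((ℕ → Bool) × (ℕ → ℕ)) => Hmap (p.1, p.2.1) :=
    Hmap_continuous.comp (continuous_fst.prodMk (continuous_fst.comp continuous_snd))
  exact hclosed.analyticSet.image_of_continuous hco

end Stmt15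

end Stmt15Aux

open Stmt15 in
theorem stmt_15 :
    ∃ E : Set ℝ, AnalyticSet E ∧
      ∀ Z : Set ℝ, IsMeagre Z →
        ∃ x : ℝ, ¬ MeasurableSet (E \ (x +ᵥ Z)) := by
  refine ⟨Ebig, Ebig_analytic, ?_⟩
  intro Z hZ
  -- extract a ℕ-indexed family of dense open sets whose intersection avoids Z
  have hres : Zᶜ ∈ residual ℝ := hZ
  obtain ⟨t, hts, htGδ, htd⟩ := mem_residual.1 hres
  obtain ⟨T, hTo, hTc, rfl⟩ := htGδ
  have hTne : (insert (univ : Set ℝ) T).Nonempty := ⟨univ, mem_insert _ _⟩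
  obtain ⟨V, hVr⟩ := (hTc.insert (univ : Set ℝ)).exists_eq_range hTne
  have hVo : ∀ n, IsOpen (V n) := by
    intro n
    have : V n ∈ insert (univ : Set ℝ) T := hVr ▸ mem_range_self n
    rcases this with h | h
    · rw [h]; exact isOpen_univ
    · exact hTo _ h
  have hVd : ∀ n, Dense (V n) := by
    intro n
    have hmem : V n ∈ insert (univ : Set ℝ) T := hVr ▸ mem_range_self n
    rcases hmem with h | h
    · rw [h]; exact dense_univ
    · exact htd.mono (sInter_subset_of_mem h)
  have hIV : ⋂ n, V n ⊆ Zᶜ := by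
    intro r hr
    apply hts
    intro S hS
    have : S ∈ insert (univ : Set ℝ) T := mem_insert_of_mem _ hS
    rw [hVr] at this
    obtain ⟨n, rfl⟩ := this
    exact mem_iInter.1 hr n
  obtain ⟨u, x, hux⟩ := construction_main V hVo hVd
  refine ⟨x, ?_⟩
  intro hM
  -- the set A is the preimage of the measurable set under a continuous map
  have havoid : ∀ a : ℕ → Bool, Hmap (u, a) ∉ x +ᵥ Z := by
    intro a hmem
    obtain ⟨z, hz, hzx⟩ := hmem
    have h1 : Hmap (u, a) - x ∈ ⋂ n, V n := mem_iInter.2 fun n => hux a n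
    have h2 : Hmap (u, a) - x ∈ Zᶜ := hIV h1
    apply h2
    have : Hmap (u, a) - x = z := by
      have : x + z = Hmap (u, a) := hzx
      linarith
    rw [this]
    exact hz
  have hpre : ASet = (fun a : ℕ → Bool => Hmap (u, a)) ⁻¹' (Ebig \ (x +ᵥ Z)) := by
    ext a
    constructor
    · intro ha
      obtain ⟨⟨a', y⟩, hay, ha'⟩ := ha
      refine ⟨⟨(u, (a, y)), ?_, rfl⟩, havoid a⟩
      show (a, y) ∈ Chat
      have : a' = a := ha'
      rwa [this] at hay
    · rintro ⟨hE, -⟩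
      obtain ⟨⟨u', a', y'⟩, hmem, heq⟩ := hE
      have := Hmap_inj heq
      have hu' : u' = u := congrArg Prod.fst this
      have ha' : a' = a := congrArg Prod.snd this
      refine ⟨(a, y'), ?_, rfl⟩
      show (a, y') ∈ Chat
      rw [← ha']
      exact hmem
  have hcont : Continuous fun a : ℕ → Bool => Hmap (u, a) :=
    Hmap_continuous.comp (continuous_const.prodMk continuous_id)
  have : MeasurableSet ASet := by
    rw [hpre]
    exact hcont.measurable hM
  exact ASet_not_measurable this
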